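/- Let Γ ⊆ ℂ be a non-empty open region with 1 ∈ Γ and let p ∈ (0,1]. Define B = {z/(p(z−1)) : z ∈ Γ, z ≠ 1}. If 0 ∈ closure(Γ), then dist(1, B) ≤ 1. Moreover if α = inf(Γ ∩ ℝ₊) and β = sup(Γ ∩ ℝ₊), then dist(1, B) ≤ min{ α/(p(1−α)) + 1 , 1/(p(β−1)) + (1−p)/p } (with the convention 1/∞ = 0). -/

import Mathlib

open scoped Classical

private lemma auxMem (p : ℝ) {Γ B : Set ℂ}
    (hB : B = {w : ℂ | ∃ z ∈ Γ, z ≠ 1 ∧ w = z / ((p : ℂ) * (z - 1))})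
    {x : ℝ} (hx : (x : ℂ) ∈ Γ) (hx1 : x ≠ 1) :
    Metric.infDist 1 B ≤ |1 - x / (p * (x - 1))| := by
  have hmem : (x : ℂ) / ((p : ℂ) * ((x : ℂ) - 1)) ∈ B := by
    rw [hB]
    exact ⟨(x : ℂ), hx, Complex.ofReal_ne_one.mpr hx1, rfl⟩
  have h := Metric.infDist_le_dist_of_mem (x := (1:ℂ)) hmem
  refine h.trans_eq ?_
  rw [dist_eq_norm]
  have he : (1 : ℂ) - (x : ℂ) / ((p : ℂ) * ((x : ℂ) - 1))
      = ((1 - x / (p * (x - 1)) : ℝ) : ℂ) := by push_cast; ring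
  rw [he, Complex.norm_real, Real.norm_eq_abs]

set_option maxHeartbeats 1000000 in
theorem stmt15 (Γ : Set ℂ) (hne : Γ.Nonempty) (hopen : IsOpen Γ)
    (h1 : (1 : ℂ) ∈ Γ) (p : ℝ) (hp0 : 0 < p) (hp1 : p ≤ 1)
    (B : Set ℂ)
    (hB : B = {w : ℂ | ∃ z ∈ Γ, z ≠ 1 ∧ w = z / ((p : ℂ) * (z - 1))})
    (S : Set ℝ) (hS : S = {x : ℝ | 0 < x ∧ (x : ℂ) ∈ Γ}) :
    ((0 : ℂ) ∈ closure Γ → Metric.infDist 1 B ≤ 1) ∧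
    Metric.infDist 1 B ≤
      min (sInf S / (p * (1 - sInf S)) + 1)
          (if BddAbove S then 1 / (p * (sSup S - 1)) + (1 - p) / p
           else (1 - p) / p) := by
  -- a ball around 1 inside Γ
  obtain ⟨r, hr, hball⟩ := Metric.isOpen_iff.mp hopen 1 h1
  set t : ℝ := min (r / 2) (1 / 2) with ht
  have ht0 : 0 < t := lt_min (by linarith) (by norm_num)
  have ht1 : t ≤ 1 / 2 := min_le_right _ _
  have htr : t < r := lt_of_le_of_lt (min_le_left _ _) (by linarith)
  have hmemt : ∀ s : ℝ, |s| = t → ((1 + s : ℝ) : ℂ) ∈ Γ := by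
    intro s hs
    apply hball
    rw [Metric.mem_ball, dist_eq_norm]
    have : ((1 + s : ℝ) : ℂ) - 1 = ((s : ℝ) : ℂ) := by push_cast; ring
    rw [this, Complex.norm_real, Real.norm_eq_abs, hs]; exact htr
  have hlo : (1 - t) ∈ S := by
    rw [hS]
    refine ⟨by linarith, ?_⟩
    have := hmemt (-t) (by rw [abs_neg, abs_of_pos ht0])
    simpa [sub_eq_add_neg] using this
  have hhi : (1 + t) ∈ S := by
    rw [hS]
    refine ⟨by linarith, ?_⟩
    exact hmemt t (abs_of_pos ht0)
  have hSne : S.Nonempty := ⟨_, hlo⟩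
  have hSbdd : BddBelow S := ⟨0, fun y hy => by rw [hS] at hy; exact hy.1.le⟩
  set α := sInf S with hα
  have hα0 : 0 ≤ α := le_csInf hSne (fun y hy => by rw [hS] at hy; exact hy.1.le)
  have hα1 : α < 1 := lt_of_le_of_lt (csInf_le hSbdd hlo) (by linarith)
  constructor
  · -- Part 1
    intro h0
    refine le_of_forall_pos_le_add ?_
    intro ε hε
    set δ : ℝ := min (1 / 2) (ε * p / 2) with hδ
    have hδ0 : 0 < δ := lt_min (by norm_num) (by positivity)
    obtain ⟨z, hz, hzd⟩ := Metric.mem_closure_iff.mp h0 δ hδ0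
    rw [dist_comm, dist_zero_right] at hzd
    have hz12 : ‖z‖ < 1 / 2 := lt_of_lt_of_le hzd (min_le_left _ _)
    have hz1 : z ≠ 1 := by
      intro h; rw [h] at hz12; norm_num at hz12
    have hmem : z / ((p : ℂ) * (z - 1)) ∈ B := by
      rw [hB]; exact ⟨z, hz, hz1, rfl⟩
    have h := Metric.infDist_le_dist_of_mem (x := (1:ℂ)) hmem
    refine h.trans ?_
    rw [dist_eq_norm]
    have hz1norm : (1 : ℝ) / 2 ≤ ‖z - 1‖ := by
      have h' := norm_sub_norm_le (1 : ℂ) z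
      rw [norm_sub_rev] at h'
      simp only [norm_one] at h'
      linarith
    have hwnorm : ‖z / ((p : ℂ) * (z - 1))‖ ≤ ε := by
      rw [norm_div, norm_mul, Complex.norm_real, Real.norm_eq_abs, abs_of_pos hp0]
      have hden : p * (1 / 2) ≤ p * ‖z - 1‖ := by
        exact mul_le_mul_of_nonneg_left hz1norm hp0.le
      have hden0 : 0 < p * ‖z - 1‖ := by nlinarith
      rw [div_le_iff₀ hden0]
      have : ‖z‖ < ε * p / 2 := lt_of_lt_of_le hzd (min_le_right _ _)
      nlinarith
    calc ‖(1 : ℂ) - z / ((p : ℂ) * (z - 1))‖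
        ≤ ‖(1 : ℂ)‖ + ‖z / ((p : ℂ) * (z - 1))‖ := norm_sub_le _ _
      _ ≤ 1 + ε := by rw [norm_one]; linarith
  · refine le_min ?_ ?_
    · -- bound via sInf
      refine le_of_forall_pos_le_add ?_
      intro ε hε
      set δ : ℝ := min ((1 - α) / 2) (ε * p * (1 - α) ^ 2 / 2) with hδ
      have h1α : 0 < 1 - α := by linarith
      have hδ0 : 0 < δ := lt_min (by linarith) (by positivity)
      obtain ⟨x, hxS, hxδ⟩ := Real.lt_sInf_add_pos hSne hδ0
      have hxα : α ≤ x := csInf_le hSbdd hxS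
      have hx1 : x < 1 := by
        have : δ ≤ (1 - α) / 2 := min_le_left _ _
        linarith
      rw [hS] at hxS
      have key := auxMem p hB hxS.2 (ne_of_lt hx1)
      refine key.trans ?_
      have h1x : 0 < 1 - x := by linarith
      have habs : |1 - x / (p * (x - 1))| = x / (p * (1 - x)) + 1 := by
        have hx' : x / (p * (x - 1)) = -(x / (p * (1 - x))) := by
          rw [show p * (x - 1) = -(p * (1 - x)) by ring, div_neg]
        rw [hx', sub_neg_eq_add]
        rw [abs_of_pos]
        · ring
        · have : 0 ≤ x / (p * (1 - x)) := div_nonneg hxS.1.le (mul_pos hp0 h1x).le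
          linarith
      rw [habs]
      have he1 : x / (p * (1 - x)) = α / (p * (1 - α)) + (x - α) / (p * (1 - x) * (1 - α)) := by
        field_simp
        ring
      rw [he1]
      have hterm : (x - α) / (p * (1 - x) * (1 - α)) ≤ ε := by
        rw [div_le_iff₀ (mul_pos (mul_pos hp0 h1x) h1α)]
        have hd1 : δ ≤ (1 - α) / 2 := min_le_left _ _
        have hd2 : δ ≤ ε * p * (1 - α) ^ 2 / 2 := min_le_right _ _
        have h1xge : (1 - α) / 2 ≤ 1 - x := by linarith
        have hc : 0 ≤ ε * p * (1 - α) * ((1 - x) - (1 - α) / 2) :=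
          mul_nonneg (mul_nonneg (mul_nonneg hε.le hp0.le) h1α.le) (by linarith)
        nlinarith [hc]
      linarith
    · split_ifs with hbdd
      · -- bounded above
        set β := sSup S with hβ
        have hβ1 : 1 < β := by
          have := le_csSup hbdd hhi
          linarith
        refine le_of_forall_pos_le_add ?_
        intro ε hε
        set δ : ℝ := min ((β - 1) / 2) (ε * p * (β - 1) ^ 2 / 2) with hδ
        have hβ1' : 0 < β - 1 := by linarith
        have hδ0 : 0 < δ := lt_min (by linarith) (by positivity)
        obtain ⟨x, hxS, hxδ⟩ := Real.add_neg_lt_sSup hSne (show -δ < 0 by linarith)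
        have hxβ : x ≤ β := le_csSup hbdd hxS
        have hx1 : 1 < x := by
          have hd1 : δ ≤ (β - 1) / 2 := min_le_left _ _
          linarith
        rw [hS] at hxS
        have key := auxMem p hB hxS.2 (ne_of_gt hx1)
        refine key.trans ?_
        have hx1' : 0 < x - 1 := by linarith
        have habs : |1 - x / (p * (x - 1))| = x / (p * (x - 1)) - 1 := by
          rw [abs_sub_comm, abs_of_nonneg]
          have hge : 1 ≤ x / (p * (x - 1)) := by
            rw [le_div_iff₀ (mul_pos hp0 hx1')]
            nlinarith
          linarith
        rw [habs]
        have hrhs : 1 / (p * (β - 1)) + (1 - p) / p = β / (p * (β - 1)) - 1 := by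
          field_simp
          ring
        rw [hrhs]
        have he2 : x / (p * (x - 1)) = β / (p * (β - 1)) + (β - x) / (p * (x - 1) * (β - 1)) := by
          field_simp
          ring
        rw [he2]
        have hterm : (β - x) / (p * (x - 1) * (β - 1)) ≤ ε := by
          rw [div_le_iff₀ (mul_pos (mul_pos hp0 hx1') hβ1')]
          have hd1 : δ ≤ (β - 1) / 2 := min_le_left _ _
          have hd2 : δ ≤ ε * p * (β - 1) ^ 2 / 2 := min_le_right _ _
          have hxge : (β - 1) / 2 ≤ x - 1 := by linarith
          have hc : 0 ≤ ε * p * (β - 1) * ((x - 1) - (β - 1) / 2) :=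
            mul_nonneg (mul_nonneg (mul_nonneg hε.le hp0.le) hβ1'.le) (by linarith)
          nlinarith [hc]
        linarith
      · -- unbounded above
        refine le_of_forall_pos_le_add ?_
        intro ε hε
        obtain ⟨x, hxS, hxgt⟩ := not_bddAbove_iff.mp hbdd (1 + 1 / (p * ε))
        have hx1 : 1 < x := by
          have : 0 < 1 / (p * ε) := by positivity
          linarith
        rw [hS] at hxS
        have key := auxMem p hB hxS.2 (ne_of_gt hx1)
        refine key.trans ?_
        have hx1' : 0 < x - 1 := by linarith
        have habs : |1 - x / (p * (x - 1))| = x / (p * (x - 1)) - 1 := by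
          rw [abs_sub_comm, abs_of_nonneg]
          have hge : 1 ≤ x / (p * (x - 1)) := by
            rw [le_div_iff₀ (mul_pos hp0 hx1')]
            nlinarith
          linarith
        rw [habs]
        have he3 : x / (p * (x - 1)) = 1 / p + 1 / (p * (x - 1)) := by
          field_simp
          ring
        rw [he3]
        have hterm : 1 / (p * (x - 1)) ≤ ε := by
          rw [div_le_iff₀ (mul_pos hp0 hx1')]
          have : 1 / (p * ε) < x - 1 := by linarith
          rw [div_lt_iff₀ (by positivity)] at this
          nlinarith
        have : (1 - p) / p = 1 / p - 1 := by field_simp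
        linarith
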